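/- Finite intersections of Arf good subsemigroups of $\mathbb{N}^d$ having the same coordinate projections are again Arf good subsemigroups: if $S_1, S_2 \subseteq \mathbb{N}^d$ are Arf good local subsemigroups such that for each $j$ the $j$-th coordinate projections of $S_1$ and $S_2$ coincide, then $S_1 \cap S_2$ is an Arf good local subsemigroup of $\mathbb{N}^d$ with the same coordinate projections. -/

import Mathlib

open scoped Classical

/-- A numerical semigroup: an additive submonoid of ℕ with finite complement. -/
def IsNumericalSemigroup (S : Set ℕ) : Prop :=
  0 ∈ S ∧ (∀ a ∈ S, ∀ b ∈ S, a + b ∈ S) ∧ Sᶜ.Finite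

/-- `S ⊆ ℕ` is Arf: `{n - s : n ∈ S, n ≥ s}` is closed under addition for all `s ∈ S`. -/
def IsArfNS (S : Set ℕ) : Prop :=
  ∀ s ∈ S, ∀ x ∈ S, ∀ y ∈ S, s ≤ x → s ≤ y → x + y - s ∈ S

/-- A good subsemigroup of ℕ^d: contains 0, closed under addition and
componentwise minimum, satisfies the completion property, and contains
`δ + ℕ^d` for some `δ`. -/
def IsGoodSgp {d : ℕ} (S : Set (Fin d → ℕ)) : Prop :=
  (0 ∈ S) ∧ (∀ a ∈ S, ∀ b ∈ S, a + b ∈ S) ∧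
  (∀ a ∈ S, ∀ b ∈ S, a ⊓ b ∈ S) ∧
  (∀ a ∈ S, ∀ b ∈ S, a ≠ b → ∀ i, a i = b i →
    ∃ c ∈ S, a i < c i ∧ ∀ j, j ≠ i →
      (min (a j) (b j) ≤ c j ∧ (a j ≠ b j → c j = min (a j) (b j)))) ∧
  (∃ δ : Fin d → ℕ, ∀ x, δ ≤ x → x ∈ S)

/-- `S` is local: `0` is the only element with some coordinate equal to `0`. -/
def IsLocalSgp {d : ℕ} (S : Set (Fin d → ℕ)) : Prop :=
  ∀ a ∈ S, (∃ i, a i = 0) → a = 0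

/-- `S ⊆ ℕ^d` is Arf: for every `α ∈ S`, the set
`{β - α : β ∈ S, β ≥ α}` is closed under addition. -/
def IsArfSgp {d : ℕ} (S : Set (Fin d → ℕ)) : Prop :=
  ∀ s ∈ S, ∀ x ∈ S, ∀ y ∈ S, s ≤ x → s ≤ y → x + y - s ∈ S

namespace ArfGoodAux

variable {d : ℕ} {S : Set (Fin d → ℕ)}

/-- sup closure -/
lemma sup_mem (hgood : IsGoodSgp S) (harf : IsArfSgp S) {a b : Fin d → ℕ}
    (ha : a ∈ S) (hb : b ∈ S) : a ⊔ b ∈ S := by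
  have hm : a ⊓ b ∈ S := hgood.2.2.1 a ha b hb
  have h := harf (a ⊓ b) hm a ha b hb inf_le_left inf_le_right
  have he : a + b - (a ⊓ b) = a ⊔ b := by
    funext m
    show a m + b m - min (a m) (b m) = max (a m) (b m)
    omega
  rwa [he] at h

lemma sup_finset_mem (hgood : IsGoodSgp S) (harf : IsArfSgp S) {α : Fin d → ℕ}
    (hα : α ∈ S) (g : Fin d → (Fin d → ℕ)) (hgS : ∀ k, g k ∈ S) :
    α ⊔ Finset.univ.sup g ∈ S := by
  suffices h : ∀ t : Finset (Fin d), α ⊔ t.sup g ∈ S from h Finset.univ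
  intro t
  induction t using Finset.induction with
  | empty => simpa using hα
  | @insert a t hat ih =>
      rw [Finset.sup_insert, sup_left_comm]
      exact sup_mem hgood harf (hgS a) ih

/-- Dichotomy: on a fiber, each coordinate is either constant or unbounded. -/
lemma dichotomy (hgood : IsGoodSgp S) (harf : IsArfSgp S) (F : Set (Fin d)) {α : Fin d → ℕ}
    (hα : α ∈ S) (m : Fin d) (M : ℕ) :
    (∀ w ∈ S, (∀ f ∈ F, w f = α f) → w m = α m) ∨
    (∃ w ∈ S, (∀ f ∈ F, w f = α f) ∧ α ≤ w ∧ M ≤ w m) := by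
  by_cases hc : ∀ w ∈ S, (∀ f ∈ F, w f = α f) → w m = α m
  · exact Or.inl hc
  right
  push_neg at hc
  obtain ⟨w, hwS, hwF, hwm⟩ := hc
  have step1 : ∃ u ∈ S, (∀ f ∈ F, u f = α f) ∧ α ≤ u ∧ α m + 1 ≤ u m := by
    rcases lt_or_gt_of_ne hwm with hlt | hgt
    · -- w m < α m : use α + α - (α ⊓ w)
      refine ⟨α + α - (α ⊓ w),
        harf (α ⊓ w) (hgood.2.2.1 α hα w hwS) α hα α hα inf_le_left inf_le_left, ?_, ?_, ?_⟩
      · intro f hf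
        have := hwF f hf
        show α f + α f - min (α f) (w f) = α f
        omega
      · intro k
        show α k ≤ α k + α k - min (α k) (w k)
        omega
      · show α m + 1 ≤ α m + α m - min (α m) (w m)
        omega
    · refine ⟨α ⊔ w, sup_mem hgood harf hα hwS, ?_, le_sup_left, ?_⟩
      · intro f hf
        have := hwF f hf
        show max (α f) (w f) = α f
        omega
      · show α m + 1 ≤ max (α m) (w m)
        omega
  obtain ⟨u, huS, huF, huge, hum⟩ := step1
  have iter : ∀ k : ℕ, ∃ v ∈ S, (∀ f ∈ F, v f = α f) ∧ α ≤ v ∧ α m + 1 + k ≤ v m := by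
    intro k
    induction k with
    | zero => exact ⟨u, huS, huF, huge, by omega⟩
    | succ k ih =>
        obtain ⟨v, hvS, hvF, hvge, hvm⟩ := ih
        refine ⟨v + v - α, harf α hα v hvS v hvS hvge hvge, ?_, ?_, ?_⟩
        · intro f hf
          have h1 := hvF f hf
          show v f + v f - α f = α f
          omega
        · intro k'
          have h2 : α k' ≤ v k' := hvge k'
          show α k' ≤ v k' + v k' - α k'
          omega
        · have h2 : α m ≤ v m := hvge m
          show α m + 1 + (k + 1) ≤ v m + v m - α m
          omega
  obtain ⟨v, hvS, hvF, hvge, hvm⟩ := iter M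
  exact ⟨v, hvS, hvF, hvge, by omega⟩

/-- truncated maximum of a fiber -/
lemma trunc_max (hgood : IsGoodSgp S) (harf : IsArfSgp S) (F : Set (Fin d)) {α : Fin d → ℕ}
    (hα : α ∈ S) (M : ℕ) :
    ∃ c ∈ S, (∀ f ∈ F, c f = α f) ∧ α ≤ c ∧
      ∀ m, M ≤ c m ∨ ∀ w ∈ S, (∀ f ∈ F, w f = α f) → w m = α m := by
  have hchoice : ∀ m : Fin d, ∃ u : Fin d → ℕ,
      (u ∈ S ∧ (∀ f ∈ F, u f = α f) ∧ α ≤ u) ∧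
      (M ≤ u m ∨ ∀ w ∈ S, (∀ f ∈ F, w f = α f) → w m = α m) := by
    intro m
    rcases dichotomy hgood harf F hα m M with h | ⟨u, huS, huF, hge, hum⟩
    · exact ⟨α, ⟨hα, fun f _ => rfl, le_refl α⟩, Or.inr h⟩
    · exact ⟨u, ⟨huS, huF, hge⟩, Or.inl hum⟩
  choose g hg1 hg2 using hchoice
  refine ⟨α ⊔ Finset.univ.sup g, sup_finset_mem hgood harf hα g (fun k => (hg1 k).1),
    ?_, le_sup_left, ?_⟩
  · intro f hf
    have h1 : (Finset.univ.sup g) f ≤ α f := by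
      rw [Finset.sup_apply]
      exact Finset.sup_le (fun k _ => le_of_eq ((hg1 k).2.1 f hf))
    show max (α f) (Finset.univ.sup g f) = α f
    omega
  · intro m
    rcases hg2 m with h | h
    · left
      have h1 : g m ≤ Finset.univ.sup g := Finset.le_sup (Finset.mem_univ m)
      have h2 : g m m ≤ Finset.univ.sup g m := h1 m
      show M ≤ max (α m) (Finset.univ.sup g m)
      omega
    · exact Or.inr h



/-- the j-th projection -/
def projSet (S : Set (Fin d → ℕ)) (j : Fin d) : Set ℕ := (fun a => a j) '' S

lemma projSet_infinite (hgood : IsGoodSgp S) (j : Fin d) : (projSet S j).Infinite := by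
  obtain ⟨δ, hδ⟩ := hgood.2.2.2.2
  refine Set.infinite_of_injective_forall_mem (f := fun v : ℕ => v + δ j)
    (fun x y h => by dsimp at h; omega) ?_
  intro v
  refine ⟨fun k => if k = j then v + δ j else δ k, hδ _ ?_, by simp⟩
  intro k
  by_cases h : k = j
  · subst h; simp
  · simp [h]

lemma projSet_setOf_infinite (hgood : IsGoodSgp S) (j : Fin d) :
    (setOf (· ∈ projSet S j)).Infinite := by
  exact projSet_infinite hgood j

lemma zero_mem_projSet (hgood : IsGoodSgp S) (j : Fin d) : 0 ∈ projSet S j :=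
  ⟨0, hgood.1, rfl⟩

/-- enumeration of the projection -/
noncomputable def en (S : Set (Fin d → ℕ)) (j : Fin d) (t : ℕ) : ℕ :=
  Nat.nth (· ∈ projSet S j) t

lemma en_mem (hgood : IsGoodSgp S) (j : Fin d) (t : ℕ) : en S j t ∈ projSet S j :=
  Nat.nth_mem_of_infinite (projSet_setOf_infinite hgood j) t

lemma en_strictMono (hgood : IsGoodSgp S) (j : Fin d) : StrictMono (en S j) :=
  Nat.nth_strictMono (projSet_setOf_infinite hgood j)

lemma en_zero (hgood : IsGoodSgp S) (j : Fin d) : en S j 0 = 0 := by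
  rw [en, Nat.nth_zero]
  exact Nat.sInf_eq_zero.mpr (Or.inl (zero_mem_projSet hgood j))

lemma en_surj (j : Fin d) {v : ℕ} (hv : v ∈ projSet S j) : ∃ t, en S j t = v :=
  ⟨Nat.count (· ∈ projSet S j) v, Nat.nth_count hv⟩

lemma en_next (hgood : IsGoodSgp S) (j : Fin d) {v t : ℕ} (hv : v ∈ projSet S j)
    (hlt : en S j t < v) : en S j (t + 1) ≤ v := by
  obtain ⟨s, rfl⟩ := en_surj j hv
  have hts : t < s := (en_strictMono hgood j).lt_iff_lt.mp hlt
  exact (en_strictMono hgood j).monotone hts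

/-- THE DIAGONAL LEMMA: the vector of t-th projection values lies in S. -/
lemma diag_mem (hgood : IsGoodSgp S) (harf : IsArfSgp S) (t : ℕ) :
    (fun m => en S m t) ∈ S := by
  induction t with
  | zero =>
      have h : (fun m => en S m 0) = (0 : Fin d → ℕ) := funext fun m => en_zero hgood m
      rw [h]; exact hgood.1
  | succ t IH =>
      by_cases hd : Nonempty (Fin d)
      case neg =>
        haveI := not_nonempty_iff.mp hd
        have h : (fun m => en S m (t + 1)) = (0 : Fin d → ℕ) :=
          funext fun m => isEmptyElim m
        rw [h]; exact hgood.1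
      case pos =>
        haveI := hd
        -- witnesses for the next values
        have hwit : ∀ m : Fin d, ∃ x, x ∈ S ∧ x m = en S m (t + 1) := by
          intro m
          obtain ⟨x, hx, hxe⟩ := en_mem hgood m (t + 1)
          exact ⟨x, hx, hxe⟩
        choose w hwS hwval using hwit
        have hlt : ∀ m, en S m t < en S m (t + 1) :=
          fun m => en_strictMono hgood m (Nat.lt_succ_self t)
        set vt : Fin d → ℕ := fun m => en S m t with hvt
        set u : Fin d → (Fin d → ℕ) := fun m => w m ⊔ vt with hu
        have huS : ∀ m, u m ∈ S := fun m => sup_mem hgood harf (hwS m) IH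
        have hum : ∀ m, u m m = en S m (t + 1) := by
          intro m
          show max (w m m) (vt m) = en S m (t + 1)
          rw [hwval m]
          have h0 : vt m = en S m t := rfl
          have := hlt m
          omega
        have huge : ∀ m, vt ≤ u m := fun m => le_sup_right
        set M : ℕ := Finset.univ.sup fun f => en S f (t + 1) with hM
        have hMc : ∀ f, en S f (t + 1) ≤ M := by
          intro f
          have := Finset.le_sup (s := Finset.univ) (f := fun g => en S g (t + 1))
            (Finset.mem_univ f)
          simpa using this
        have hrm : ∀ m : Fin d, ∃ r, r ∈ S ∧ ∀ f, en S f (t + 1) ≤ r f ∧ r m = en S m (t+1) := by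
          intro m
          obtain ⟨c, hcS, hcF, hcge, hcprop⟩ :=
            trunc_max hgood harf {m} (huS m) M
          have hcm : c m = u m m := hcF m rfl
          refine ⟨c, hcS, ?_⟩
          have main : ∀ f, en S f (t + 1) ≤ c f := by
            intro f
            by_cases hfm : f = m
            · subst hfm
              rw [hcm, hum f]
            · rcases hcprop f with hbig | hconst
              · exact le_trans (hMc f) hbig
              · -- constancy case : every element of S with m-coord = u m m has f-coord = u m f
                have hcf : u m f ≤ c f := hcge f
                have hPf : u m f ∈ projSet S f := ⟨u m, huS m, rfl⟩
                have h1 : vt f ≤ u m f := huge m f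
                rcases eq_or_lt_of_le h1 with heq | hlt2
                · exfalso
                  -- u m f = vt f ; get a contradiction
                  rcases dichotomy hgood harf {f} IH m (u m m + 1) with hconst2 | hB
                  · have h2 := hconst2 (u m) (huS m)
                      (fun f' hf' => by
                        rw [Set.mem_singleton_iff] at hf'; subst hf'; exact heq.symm)
                    -- h2 : u m m = vt m
                    have h3 := hlt m
                    rw [hum m] at h2
                    have : vt m = en S m t := rfl
                    omega
                  · obtain ⟨B, hBS, hBf, hBge, hBm⟩ := hB
                    have hBf' : B f = vt f := hBf f rfl
                    have hne : u m ≠ B := by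
                      intro h
                      have := congrFun h m
                      omega
                    have heqf : u m f = B f := by rw [hBf', ← heq]
                    obtain ⟨ε, hεS, hεf, hεother⟩ :=
                      hgood.2.2.2.1 (u m) (huS m) B hBS hne f heqf
                    have hmf : m ≠ f := fun h => hfm h.symm
                    have hεm := (hεother m hmf).2 (by omega)
                    -- hεm : ε m = min (u m m) (B m)
                    have hεmeq : ε m = u m m := by
                      rw [hεm]; omega
                    have := hconst ε hεS
                      (fun f' hf' => by
                        rw [Set.mem_singleton_iff] at hf'; subst hf'; exact hεmeq)
                    -- this : ε f = u m f, but hεf : u m f < ε f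
                    omega
                · -- vt f < u m f
                  have := en_next hgood f hPf hlt2
                  omega
          exact fun f => ⟨main f, by rw [hcm, hum m]⟩
        choose r hrS hrprop using hrm
        have hkey : (fun m => en S m (t + 1)) = Finset.univ.inf' Finset.univ_nonempty r := by
          funext f
          rw [Finset.inf'_apply]
          apply le_antisymm
          · apply Finset.le_inf'
            intro m _
            exact (hrprop m f).1
          · have h1 : Finset.univ.inf' Finset.univ_nonempty (fun m => r m f) ≤ r f f :=
              Finset.inf'_le _ (Finset.mem_univ f)
            rw [(hrprop f f).2] at h1
            exact h1
        rw [hkey]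
        exact Finset.inf'_mem S (fun x hx y hy => hgood.2.2.1 x hx y hy) _ _ r
          (fun i _ => hrS i)



/-- Symmetry of "ties": if a fiber over C forces coordinate m, then some single
coordinate of C is forced by m. -/
lemma symj (hgood : IsGoodSgp S) (harf : IsArfSgp S) {α : Fin d → ℕ} (hα : α ∈ S)
    (C : Set (Fin d)) (hCne : C.Nonempty) (m : Fin d)
    (hconst : ∀ w ∈ S, (∀ f ∈ C, w f = α f) → w m = α m) :
    ∃ f0 ∈ C, ∀ w ∈ S, w m = α m → w f0 = α f0 := by
  by_cases hmC : m ∈ C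
  · exact ⟨m, hmC, fun w _ h => h⟩
  by_contra hcon
  push_neg at hcon
  -- for each f ∈ C, the fiber over {m} is non-constant at f, hence unbounded
  have hstep : ∀ f : Fin d, ∃ u, (u ∈ S ∧ u m = α m ∧ α ≤ u) ∧ (f ∈ C → α f + 1 ≤ u f) := by
    intro f
    by_cases hf : f ∈ C
    · rcases dichotomy hgood harf {m} hα f (α f + 1) with hcst | hub
      · exfalso
        obtain ⟨w, hwS, hwm, hwf⟩ := hcon f hf
        exact hwf (hcst w hwS (fun f' hf' => by
          rw [Set.mem_singleton_iff] at hf'; subst hf'; exact hwm))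
      · obtain ⟨u, huS, huF, huge, huf⟩ := hub
        exact ⟨u, ⟨huS, huF m rfl, huge⟩, fun _ => by omega⟩
    · exact ⟨α, ⟨hα, rfl, le_refl α⟩, fun h => absurd h hf⟩
  choose g hg1 hg2 using hstep
  set u : Fin d → ℕ := α ⊔ Finset.univ.sup g with hudef
  have huS : u ∈ S := sup_finset_mem hgood harf hα g (fun k => (hg1 k).1)
  have hum : u m = α m := by
    have h1 : (Finset.univ.sup g) m ≤ α m := by
      rw [Finset.sup_apply]
      exact Finset.sup_le (fun k _ => le_of_eq (hg1 k).2.1)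
    show max (α m) (Finset.univ.sup g m) = α m
    omega
  have huf : ∀ f ∈ C, α f + 1 ≤ u f := by
    intro f hf
    have h1 : g f ≤ Finset.univ.sup g := Finset.le_sup (Finset.mem_univ f)
    have h2 : g f f ≤ Finset.univ.sup g f := h1 f
    have h3 := hg2 f hf
    show α f + 1 ≤ max (α f) (Finset.univ.sup g f)
    omega
  obtain ⟨f1, hf1⟩ := hCne
  have hne : α ≠ u := by
    intro h
    have := congrFun h f1
    have := huf f1 hf1
    omega
  obtain ⟨ε, hεS, hεm, hεother⟩ := hgood.2.2.2.1 α hα u huS hne m hum.symm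
  have hεC : ∀ f ∈ C, ε f = α f := by
    intro f hf
    have hfm : f ≠ m := fun h => hmC (h ▸ hf)
    have h3 := huf f hf
    have h4 := (hεother f hfm).2 (by omega)
    rw [h4]
    omega
  have := hconst ε hεS hεC
  omega



/-- completion property for the intersection -/
lemma inter_completion {S1 S2 : Set (Fin d → ℕ)}
    (h1g : IsGoodSgp S1) (h1a : IsArfSgp S1)
    (h2g : IsGoodSgp S2) (h2a : IsArfSgp S2)
    {a b : Fin d → ℕ} (ha : a ∈ S1 ∩ S2) (hb : b ∈ S1 ∩ S2) (hne : a ≠ b)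
    (i : Fin d) (hi : a i = b i) :
    ∃ c ∈ S1 ∩ S2, a i < c i ∧ ∀ j, j ≠ i →
      (min (a j) (b j) ≤ c j ∧ (a j ≠ b j → c j = min (a j) (b j))) := by
  classical
  set α : Fin d → ℕ := a ⊓ b with hαdef
  set β : Fin d → ℕ := a ⊔ b with hβdef
  have hα1 : α ∈ S1 := h1g.2.2.1 a ha.1 b hb.1
  have hα2 : α ∈ S2 := h2g.2.2.1 a ha.2 b hb.2
  have hβ1 : β ∈ S1 := sup_mem h1g h1a ha.1 hb.1
  have hβ2 : β ∈ S2 := sup_mem h2g h2a ha.2 hb.2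
  have hαv : ∀ k, α k = min (a k) (b k) := fun k => rfl
  have hβv : ∀ k, β k = max (a k) (b k) := fun k => rfl
  set D : Set (Fin d) := {j | a j ≠ b j} with hDdef
  obtain ⟨j0, hj0⟩ : ∃ j0, j0 ∈ D := by
    rcases Function.ne_iff.mp hne with ⟨j0, hj0⟩
    exact ⟨j0, hj0⟩
  obtain ⟨δ1, hδ1⟩ := h1g.2.2.2.2
  obtain ⟨δ2, hδ2⟩ := h2g.2.2.2.2
  set H : Fin d → ℕ := fun m => δ1 m + δ2 m + a m + b m + 1 with hHdef
  have hHval : ∀ m, H m = δ1 m + δ2 m + a m + b m + 1 := fun m => rfl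
  have hH1 : H ∈ S1 := hδ1 H (fun m => by simp [hHdef]; omega)
  have hH2 : H ∈ S2 := hδ2 H (fun m => by simp [hHdef]; omega)
  -- the forcing (tie) closure
  set Con : Set (Fin d → ℕ) → Set (Fin d) → Set (Fin d) :=
    fun T F => {m | ∀ w ∈ T, (∀ f ∈ F, w f = α f) → w m = α m} with hConDef
  set Closed : Set (Fin d) → Prop :=
    fun F => D ⊆ F ∧ Con S1 F ⊆ F ∧ Con S2 F ⊆ F with hClosedDef
  set Fs : Set (Fin d) := ⋂₀ {F | Closed F} with hFsDef
  have hFsSub : ∀ F, Closed F → Fs ⊆ F := fun F hF => Set.sInter_subset_of_mem hF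
  have hFsD : D ⊆ Fs := by
    intro x hx
    apply Set.mem_sInter.2
    intro F hF
    exact hF.1 hx
  have hFsCon1 : Con S1 Fs ⊆ Fs := by
    intro m hm
    apply Set.mem_sInter.2
    intro F hF
    apply hF.2.1
    intro w hw hwF
    exact hm w hw (fun f hf => hwF f (hFsSub F hF hf))
  have hFsCon2 : Con S2 Fs ⊆ Fs := by
    intro m hm
    apply Set.mem_sInter.2
    intro F hF
    apply hF.2.2
    intro w hw hwF
    exact hm w hw (fun f hf => hwF f (hFsSub F hF hf))
  -- the reverse-tie set C
  set C : Set (Fin d) := D ∪ {m | ∀ w, w ∈ S1 → w ∈ S2 → w m = α m → ∃ j ∈ D, w j = α j}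
    with hCdef
  have hCne : C.Nonempty := ⟨j0, Or.inl hj0⟩
  have hCclosed : Closed C := by
    refine ⟨Set.subset_union_left, ?_, ?_⟩
    · intro m hm
      obtain ⟨f0, hf0C, htie⟩ := symj h1g h1a hα1 C hCne m hm
      right
      intro w hw1 hw2 hwm
      have hwf0 := htie w hw1 hwm
      rcases hf0C with hD | hP
      · exact ⟨f0, hD, hwf0⟩
      · exact hP w hw1 hw2 hwf0
    · intro m hm
      obtain ⟨f0, hf0C, htie⟩ := symj h2g h2a hα2 C hCne m hm
      right
      intro w hw1 hw2 hwm
      have hwf0 := htie w hw2 hwm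
      rcases hf0C with hD | hP
      · exact ⟨f0, hD, hwf0⟩
      · exact hP w hw1 hw2 hwf0
  have hiFs : i ∉ Fs := by
    intro h
    have hiC := hFsSub C hCclosed h
    rcases hiC with hD | hP
    · exact hD hi
    · obtain ⟨j, hjD, hβj⟩ := hP β hβ1 hβ2 (by rw [hβv i, hαv i]; omega)
      have h1 := hβv j
      have h2 := hαv j
      have h3 : a j ≠ b j := hjD
      omega
  -- realize the pattern (α on Fs, H off Fs) in both semigroups
  set ε : Fin d → ℕ := fun m => if m ∈ Fs then α m else H m with hεdef
  have hMH : ∀ m, H m ≤ Finset.univ.sup H := by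
    intro m
    exact Finset.le_sup (Finset.mem_univ m)
  have key : ∀ T : Set (Fin d → ℕ), IsGoodSgp T → IsArfSgp T → α ∈ T → H ∈ T →
      (Con T Fs ⊆ Fs) → ε ∈ T := by
    intro T hTg hTa hαT hHT hConT
    obtain ⟨c, hcS, hcF, hcge, hcprop⟩ :=
      trunc_max hTg hTa Fs hαT (Finset.univ.sup H)
    have hεc : ε = c ⊓ H := by
      funext m
      show ε m = min (c m) (H m)
      by_cases hm : m ∈ Fs
      · have h1 : c m = α m := hcF m hm
        have h2 : α m ≤ a m := by rw [hαv m]; omega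
        have h3 : a m < H m := by rw [hHval m]; omega
        simp only [hεdef, if_pos hm]
        omega
      · have h1 : Finset.univ.sup H ≤ c m := by
          rcases hcprop m with h | h
          · exact h
          · exact absurd (hConT h) hm
        have h2 := hMH m
        simp only [hεdef, if_neg hm]
        omega
    rw [hεc]
    exact hTg.2.2.1 c hcS H hHT
  have hε1 : ε ∈ S1 := key S1 h1g h1a hα1 hH1 hFsCon1
  have hε2 : ε ∈ S2 := key S2 h2g h2a hα2 hH2 hFsCon2
  refine ⟨ε, ⟨hε1, hε2⟩, ?_, ?_⟩
  · have h1 : ε i = H i := by simp only [hεdef, if_neg hiFs]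
    rw [h1, hHval i]
    omega
  · intro j hj
    by_cases hjFs : j ∈ Fs
    · have h1 : ε j = α j := by simp only [hεdef, if_pos hjFs]
      rw [h1, hαv j]
      exact ⟨le_refl _, fun _ => rfl⟩
    · have hjD : j ∉ D := fun h => hjFs (hFsD h)
      have h2 : a j = b j := not_not.mp hjD
      have h1 : ε j = H j := by simp only [hεdef, if_neg hjFs]
      constructor
      · rw [h1, hHval j]
        omega
      · intro h
        exact absurd h2 h



end ArfGoodAux

theorem intersection_of_arf_good_semigroups (d : ℕ) (S1 S2 : Set (Fin d → ℕ))
    (h1g : IsGoodSgp S1) (h1l : IsLocalSgp S1) (h1a : IsArfSgp S1)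
    (h2g : IsGoodSgp S2) (h2l : IsLocalSgp S2) (h2a : IsArfSgp S2)
    (hproj : ∀ j : Fin d, (fun a => a j) '' S1 = (fun a => a j) '' S2) :
    IsGoodSgp (S1 ∩ S2) ∧ IsLocalSgp (S1 ∩ S2) ∧ IsArfSgp (S1 ∩ S2) ∧
    ∀ j : Fin d, (fun a => a j) '' (S1 ∩ S2) = (fun a => a j) '' S1 := by
  obtain ⟨δ1, hδ1⟩ := h1g.2.2.2.2
  obtain ⟨δ2, hδ2⟩ := h2g.2.2.2.2
  refine ⟨⟨⟨h1g.1, h2g.1⟩, ?_, ?_, ?_, ?_⟩, ?_, ?_, ?_⟩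
  · exact fun a ha b hb => ⟨h1g.2.1 a ha.1 b hb.1, h2g.2.1 a ha.2 b hb.2⟩
  · exact fun a ha b hb => ⟨h1g.2.2.1 a ha.1 b hb.1, h2g.2.2.1 a ha.2 b hb.2⟩
  · exact fun a ha b hb hne i hi =>
      ArfGoodAux.inter_completion h1g h1a h2g h2a ha hb hne i hi
  · refine ⟨δ1 ⊔ δ2, fun x hx => ⟨hδ1 x ?_, hδ2 x ?_⟩⟩
    · exact le_trans le_sup_left hx
    · exact le_trans le_sup_right hx
  · exact fun a ha h => h1l a ha.1 h
  · exact fun s hs x hx y hy h1 h2 =>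
      ⟨h1a s hs.1 x hx.1 y hy.1 h1 h2, h2a s hs.2 x hx.2 y hy.2 h1 h2⟩
  · intro j
    ext v
    constructor
    · rintro ⟨x, ⟨hx1, _⟩, rfl⟩
      exact ⟨x, hx1, rfl⟩
    · rintro ⟨x, hx1, rfl⟩
      have hv : x j ∈ ArfGoodAux.projSet S1 j := ⟨x, hx1, rfl⟩
      obtain ⟨t, ht⟩ := ArfGoodAux.en_surj j hv
      have hd1 : (fun m => ArfGoodAux.en S1 m t) ∈ S1 := ArfGoodAux.diag_mem h1g h1a t
      have heq : (fun m => ArfGoodAux.en S1 m t) = (fun m => ArfGoodAux.en S2 m t) := by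
        funext m
        simp only [ArfGoodAux.en, ArfGoodAux.projSet]
        rw [hproj m]
      have hd2 : (fun m => ArfGoodAux.en S1 m t) ∈ S2 := by
        rw [heq]
        exact ArfGoodAux.diag_mem h2g h2a t
      exact ⟨fun m => ArfGoodAux.en S1 m t, ⟨hd1, hd2⟩, ht⟩
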